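/- arXiv:2206.04931 — 2 statements merged into one kernel-verified Lean document; each statement's English description precedes it below -/
import Mathlib

section
/- Suppose $\lambda : \mathbb{N}^2 \to \mathbb{C}$ is such that the multiplier operator $M(f) = (\lambda(m,n)\widehat{f}(m,n))_{m,n}$ is bounded from $H^1(\mathbb{T}\times\mathbb{T})$ into $\ell^2(\mathbb{N}^2)$. Then there exists a constant $C > 0$ such that for all $m, n \in \mathbb{N}$, $\sum_{\alpha=2^m}^{2^{m+1}-1} \sum_{\beta=2^n}^{2^{n+1}-1} |\lambda(\alpha,\beta)|^2 \le C$. -/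
open MeasureTheory Real Complex

/-- The torus `𝕋 × 𝕋 = [0,2π) × [0,2π)`. -/
def torus2 : Set (ℝ × ℝ) := Set.Ico 0 (2 * π) ×ˢ Set.Ico 0 (2 * π)

/-- The `(m,n)`-th Fourier coefficient of `f : 𝕋 × 𝕋 → ℂ`. -/
noncomputable def fc (f : ℝ × ℝ → ℂ) (m n : ℤ) : ℂ :=
  (1 / (2 * π) ^ 2 : ℝ) •
    ∫ p in torus2, f p * Complex.exp (-Complex.I * ((m : ℂ) * p.1 + (n : ℂ) * p.2))

/-- `f ∈ H¹(𝕋 × 𝕋)`: `f` is integrable and its Fourier coefficients vanish for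
negative frequencies. -/
def MemH1 (f : ℝ × ℝ → ℂ) : Prop :=
  IntegrableOn f torus2 ∧ ∀ m n : ℤ, (m < 0 ∨ n < 0) → fc f m n = 0

/-- `‖f‖_{H¹} = ‖f‖_{L¹}` with the normalized measure. -/
noncomputable def L1norm (f : ℝ × ℝ → ℂ) : ℝ :=
  (1 / (2 * π) ^ 2) * ∫ p in torus2, ‖f p‖

noncomputable def Dker (M : ℕ) (x : ℝ) : ℂ :=
  ∑ j ∈ Finset.range M, Complex.exp (Complex.I * j * x)

noncomputable def testA (M : ℕ) (x : ℝ) : ℂ :=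
  Complex.exp (Complex.I * M * x) * (Dker M x * (starRingEnd ℂ) (Dker M x))

noncomputable def testF (M N : ℕ) (p : ℝ × ℝ) : ℂ :=
  (1 / ((M : ℂ) * N)) * (testA M p.1 * testA N p.2)

def cnt (M : ℕ) (α : ℤ) : ℕ :=
  ((Finset.range M ×ˢ Finset.range M).filter
    (fun q => (M : ℤ) + q.1 - q.2 - α = 0)).card

lemma cnt_neg {M : ℕ} {α : ℤ} (h : α ≤ 0) : cnt M α = 0 := by
  unfold cnt
  rw [Finset.card_eq_zero, Finset.filter_eq_empty_iff]
  rintro ⟨j, j'⟩ hq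
  simp only [Finset.mem_product, Finset.mem_range] at hq
  simp only
  omega

lemma cont_exp (c : ℂ) : Continuous fun x : ℝ => Complex.exp (c * x) := by
  fun_prop

lemma integral_exp_int (k : ℤ) :
    ∫ x in Set.Ico (0:ℝ) (2*π), Complex.exp (Complex.I * k * x) =
      if k = 0 then ((2*π : ℝ) : ℂ) else 0 := by
  rw [MeasureTheory.integral_Ico_eq_integral_Ioo, ← MeasureTheory.integral_Ioc_eq_integral_Ioo,
    ← intervalIntegral.integral_of_le (by positivity : (0:ℝ) ≤ 2*π)]
  by_cases hk : k = 0
  · simp [hk]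
  · simp only [hk, if_false]
    have hc : Complex.I * k ≠ 0 := by
      simp [Complex.I_ne_zero, Int.cast_injective.ne_iff, hk]
    rw [integral_exp_mul_complex hc]
    have h1 : Complex.I * ↑k * ((2:ℝ)*π : ℝ) = k * (2 * π * Complex.I) := by
      push_cast; ring
    rw [h1, Complex.exp_int_mul_two_pi_mul_I]
    simp

lemma cnt_diag_le (M : ℕ) : cnt M ((M:ℤ)) ≤ M := by
  classical
  have h := Finset.card_le_card_of_injOn (f := fun q : ℕ × ℕ => q.1)
    (s := (Finset.range M ×ˢ Finset.range M).filter
      (fun q => (M : ℤ) + q.1 - q.2 - (M:ℤ) = 0)) (t := Finset.range M)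
    (by
      rintro ⟨j, j'⟩ hq
      simp only [Finset.mem_coe, Finset.mem_filter, Finset.mem_product, Finset.mem_range] at hq
      simpa using hq.1.1)
    (by
      rintro ⟨j, j'⟩ hq ⟨k, k'⟩ hk hjk
      simp only [Finset.coe_filter, Set.mem_setOf_eq, Finset.mem_product,
        Finset.mem_range] at hq hk
      simp only at hjk
      have : j' = j := by omega
      have : k' = k := by omega
      simp_all)
  simpa [cnt] using h

lemma cnt_lower' (A : ℕ) (α : ℤ) (h1 : (A:ℤ) ≤ α) (h2 : α < 2*A) :
    A ≤ cnt (2*A) α := by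
  classical
  have hα0 : (0:ℤ) ≤ 2*(A:ℤ) - α := by omega
  have htz : (((2*(A:ℤ) - α).toNat : ℤ)) = 2*A - α := Int.toNat_of_nonneg hα0
  set t : ℕ := ((2*(A:ℤ)) - α).toNat with ht
  have h := Finset.card_le_card_of_injOn (f := fun j : ℕ => (j, j + t))
    (s := Finset.range A)
    (t := (Finset.range (2*A) ×ˢ Finset.range (2*A)).filter
      (fun q => ((2*A : ℕ) : ℤ) + q.1 - q.2 - α = 0))
    (by
      intro j hj
      simp only [Finset.mem_coe, Finset.mem_range] at hj
      simp only [Finset.mem_coe, Finset.mem_filter, Finset.mem_product, Finset.mem_range]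
      push_cast
      omega)
    (by
      intro j _ k _ hjk
      simpa using congrArg Prod.fst hjk)
  simpa [cnt] using h

lemma testA_mul_exp (M : ℕ) (α : ℤ) (x : ℝ) :
    testA M x * Complex.exp (Complex.I * (-α : ℤ) * x) =
      ∑ q ∈ Finset.range M ×ˢ Finset.range M,
        Complex.exp (Complex.I * (((M : ℤ) + q.1 - q.2 - α : ℤ) : ℂ) * x) := by
  unfold testA Dker
  rw [map_sum, Finset.sum_mul_sum, Finset.sum_product]
  rw [Finset.mul_sum, Finset.sum_mul]
  refine Finset.sum_congr rfl fun j _ => ?_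
  rw [Finset.mul_sum, Finset.sum_mul]
  refine Finset.sum_congr rfl fun j' _ => ?_
  rw [← Complex.exp_conj]
  have hc : (starRingEnd ℂ) (Complex.I * (j':ℕ) * (x:ℝ)) = -Complex.I * j' * x := by
    simp [map_mul, Complex.conj_I, Complex.conj_ofReal]
  rw [hc, ← Complex.exp_add, ← Complex.exp_add, ← Complex.exp_add]
  congr 1
  push_cast
  ring

lemma integrableOn_Ico_of_continuous {g : ℝ → ℂ} (hg : Continuous g) :
    IntegrableOn g (Set.Ico (0:ℝ) (2*π)) :=
  ((hg.continuousOn).integrableOn_compact isCompact_Icc).mono_set Set.Ico_subset_Icc_self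

lemma integral_testA (M : ℕ) (α : ℤ) :
    ∫ x in Set.Ico (0:ℝ) (2*π), testA M x * Complex.exp (Complex.I * (-α : ℤ) * x)
      = ((2*π : ℝ) : ℂ) * cnt M α := by
  simp_rw [testA_mul_exp]
  rw [MeasureTheory.integral_finset_sum _
    (fun q _ => integrableOn_Ico_of_continuous (cont_exp _))]
  simp_rw [integral_exp_int]
  rw [← Finset.sum_filter, Finset.sum_const, cnt, nsmul_eq_mul, mul_comm]

lemma fc_testF (M N : ℕ) (hM : 0 < M) (hN : 0 < N) (a b : ℤ) :
    fc (testF M N) a b =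
      ((((cnt M a : ℝ) * (cnt N b : ℝ)) / ((M:ℝ) * (N:ℝ)) : ℝ) : ℂ) := by
  unfold fc testF torus2
  have hpt : ∀ p : ℝ × ℝ,
      (1 / ((M : ℂ) * N)) * (testA M p.1 * testA N p.2) *
        Complex.exp (-Complex.I * ((a : ℂ) * p.1 + (b : ℂ) * p.2)) =
      (1 / ((M : ℂ) * N)) *
        ((testA M p.1 * Complex.exp (Complex.I * (-a : ℤ) * p.1)) *
         (testA N p.2 * Complex.exp (Complex.I * (-b : ℤ) * p.2))) := by
    intro p
    have : Complex.exp (-Complex.I * ((a : ℂ) * p.1 + (b : ℂ) * p.2)) =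
        Complex.exp (Complex.I * (-a : ℤ) * p.1) *
        Complex.exp (Complex.I * (-b : ℤ) * p.2) := by
      rw [← Complex.exp_add]
      congr 1
      push_cast
      ring
    rw [this]; ring
  simp_rw [hpt]
  rw [MeasureTheory.integral_const_mul, MeasureTheory.Measure.volume_eq_prod,
    MeasureTheory.setIntegral_prod_mul
      (fun x : ℝ => testA M x * Complex.exp (Complex.I * ((-a : ℤ) : ℂ) * x))
      (fun y : ℝ => testA N y * Complex.exp (Complex.I * ((-b : ℤ) : ℂ) * y)),
    integral_testA, integral_testA]
  have hπ : (π : ℝ) ≠ 0 := Real.pi_ne_zero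
  have hπc : ((π : ℝ) : ℂ) ≠ 0 := Complex.ofReal_ne_zero.2 hπ
  have hM' : (M : ℂ) ≠ 0 := Nat.cast_ne_zero.2 hM.ne'
  have hN' : (N : ℂ) ≠ 0 := Nat.cast_ne_zero.2 hN.ne'
  rw [Complex.real_smul]
  push_cast
  field_simp

lemma continuous_Dker (M : ℕ) : Continuous (Dker M) := by
  unfold Dker
  exact continuous_finset_sum _ fun j _ => by fun_prop

lemma continuous_testA (M : ℕ) : Continuous (testA M) := by
  unfold testA
  have h := continuous_Dker M
  have h2 : Continuous fun x => (starRingEnd ℂ) (Dker M x) := Complex.continuous_conj.comp h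
  fun_prop

lemma continuous_testF (M N : ℕ) : Continuous (testF M N) := by
  unfold testF
  have h1 := continuous_testA M
  have h2 := continuous_testA N
  fun_prop

lemma integrableOn_testF (M N : ℕ) : IntegrableOn (testF M N) torus2 := by
  have hsub : torus2 ⊆ Set.Icc ((0:ℝ),(0:ℝ)) (2*π, 2*π) := by
    rw [← Set.Icc_prod_Icc]
    exact Set.prod_mono Set.Ico_subset_Icc_self Set.Ico_subset_Icc_self
  exact (((continuous_testF M N).continuousOn).integrableOn_compact
    isCompact_Icc).mono_set hsub

lemma memH1_testF (M N : ℕ) (hM : 0 < M) (hN : 0 < N) : MemH1 (testF M N) := by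
  refine ⟨integrableOn_testF M N, fun a b hab => ?_⟩
  rw [fc_testF M N hM hN]
  rcases hab with h | h
  · rw [cnt_neg h.le]; simp
  · rw [cnt_neg (M := N) h.le]; simp

lemma testF_mul_exp (M N : ℕ) (p : ℝ × ℝ) :
    testF M N p * Complex.exp (-Complex.I * ((M : ℂ) * p.1 + (N : ℂ) * p.2)) =
      ((1/((M:ℝ)*N) * Complex.normSq (Dker M p.1) * Complex.normSq (Dker N p.2) : ℝ) : ℂ) := by
  unfold testF testA
  rw [Complex.mul_conj, Complex.mul_conj]
  have he : Complex.exp (Complex.I * M * p.1) * Complex.exp (Complex.I * N * p.2) *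
      Complex.exp (-Complex.I * ((M : ℂ) * p.1 + (N : ℂ) * p.2)) = 1 := by
    rw [← Complex.exp_add, ← Complex.exp_add,
      show Complex.I * M * p.1 + Complex.I * N * p.2 +
        -Complex.I * ((M : ℂ) * p.1 + (N : ℂ) * p.2) = 0 by ring, Complex.exp_zero]
  push_cast
  linear_combination (1/((M:ℂ)*N) * (Complex.normSq (Dker M p.1) : ℂ) *
    (Complex.normSq (Dker N p.2) : ℂ)) * he

lemma norm_testF (M N : ℕ) (p : ℝ × ℝ) :
    ‖testF M N p‖ =
      1/((M:ℝ)*N) * Complex.normSq (Dker M p.1) * Complex.normSq (Dker N p.2) := by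
  unfold testF testA
  rw [Complex.mul_conj, Complex.mul_conj]
  simp only [norm_mul, Complex.norm_exp, Complex.norm_real, Real.norm_eq_abs,
    norm_div, norm_one, map_mul]
  rw [_root_.abs_of_nonneg (Complex.normSq_nonneg _), _root_.abs_of_nonneg (Complex.normSq_nonneg _)]
  have h1 : (Complex.I * M * p.1).re = 0 := by simp
  have h2 : (Complex.I * N * p.2).re = 0 := by simp
  rw [h1, h2]
  simp [Complex.norm_natCast]
  ring

lemma L1norm_testF (M N : ℕ) (hM : 0 < M) (hN : 0 < N) :
    L1norm (testF M N) = ((cnt M M : ℝ) * cnt N N) / ((M:ℝ)*N) := by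
  have hfc := fc_testF M N hM hN M N
  unfold fc at hfc
  rw [Complex.real_smul] at hfc
  push_cast at hfc
  have hint : (∫ p in torus2, ((‖testF M N p‖ : ℝ) : ℂ)) =
      ∫ p in torus2, testF M N p *
        Complex.exp (-Complex.I * ((M : ℂ) * p.1 + (N : ℂ) * p.2)) := by
    refine setIntegral_congr_fun
      (by unfold torus2; exact measurableSet_Ico.prod measurableSet_Ico) fun p _ => ?_
    rw [norm_testF, testF_mul_exp]
  rw [show (∫ p in torus2, ((‖testF M N p‖ : ℝ) : ℂ)) =
      ((∫ p in torus2, ‖testF M N p‖ : ℝ) : ℂ) from integral_ofReal] at hint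
  unfold L1norm
  apply Complex.ofReal_injective
  rw [Complex.ofReal_mul, hint]
  push_cast
  linear_combination hfc


set_option maxHeartbeats 2000000 in
/-- Necessity: if `λ` is a bounded Fourier multiplier from `H¹(𝕋×𝕋)` into `ℓ²`, then
the sums of `|λ|²` over dyadic blocks are uniformly bounded. -/
theorem multiplier_necessary_block_condition (lam : ℕ × ℕ → ℂ) (K : ℝ)
    (hbound : ∀ f : ℝ × ℝ → ℂ, MemH1 f →
      Summable (fun p : ℕ × ℕ => ‖lam p * fc f (p.1 : ℤ) (p.2 : ℤ)‖ ^ 2) ∧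
      (∑' p : ℕ × ℕ, ‖lam p * fc f (p.1 : ℤ) (p.2 : ℤ)‖ ^ 2) ≤ K ^ 2 * (L1norm f) ^ 2) :
    ∃ C > 0, ∀ m n : ℕ,
      ∑ α ∈ Finset.Ico (2 ^ m) (2 ^ (m + 1)), ∑ β ∈ Finset.Ico (2 ^ n) (2 ^ (n + 1)),
        ‖lam (α, β)‖ ^ 2 ≤ C := by
  refine ⟨16 * K^2 + 1, by positivity, fun m n => ?_⟩
  set M : ℕ := 2^(m+1) with hMdef
  set N : ℕ := 2^(n+1) with hNdef
  have hM : 0 < M := by positivity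
  have hN : 0 < N := by positivity
  obtain ⟨hsum, hle⟩ := hbound (testF M N) (memH1_testF M N hM hN)
  have hL1 : L1norm (testF M N) ≤ 1 := by
    rw [L1norm_testF M N hM hN, div_le_one (by positivity)]
    have h1 : (cnt M M : ℝ) ≤ M := by exact_mod_cast cnt_diag_le M
    have h2 : (cnt N N : ℝ) ≤ N := by exact_mod_cast cnt_diag_le N
    exact mul_le_mul h1 h2 (by positivity) (by positivity)
  have hL1' : 0 ≤ L1norm (testF M N) := by
    rw [L1norm_testF M N hM hN]; positivity
  have key : ∀ p : ℕ × ℕ,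
      p ∈ Finset.Ico (2^m) M ×ˢ Finset.Ico (2^n) N →
      ‖lam p‖^2 ≤ 16 * ‖lam p * fc (testF M N) (p.1 : ℤ) (p.2 : ℤ)‖^2 := by
    rintro ⟨α, β⟩ hp
    simp only [Finset.mem_product, Finset.mem_Ico] at hp
    have h2M : M = 2 * 2^m := by rw [hMdef]; ring
    have h2N : N = 2 * 2^n := by rw [hNdef]; ring
    have hcα : (2:ℝ)^m ≤ cnt M (α : ℤ) := by
      have h := cnt_lower' (2^m) (α : ℤ) (by exact_mod_cast hp.1.1)
        (by rw [h2M] at hp; exact_mod_cast hp.1.2)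
      rw [← h2M] at h
      exact_mod_cast h
    have hcβ : (2:ℝ)^n ≤ cnt N (β : ℤ) := by
      have h := cnt_lower' (2^n) (β : ℤ) (by exact_mod_cast hp.2.1)
        (by rw [h2N] at hp; exact_mod_cast hp.2.2)
      rw [← h2N] at h
      exact_mod_cast h
    have hfc := fc_testF M N hM hN (α : ℤ) (β : ℤ)
    set r : ℝ := ((cnt M (α:ℤ) : ℝ) * (cnt N (β:ℤ) : ℝ)) / ((M:ℝ) * (N:ℝ)) with hrdef
    have hr4 : (1/4 : ℝ) ≤ r := by
      rw [hrdef, le_div_iff₀ (by positivity)]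
      have hMN : (M:ℝ) * N = 4 * ((2:ℝ)^m * 2^n) := by
        rw [h2M, h2N]; push_cast; ring
      rw [hMN]
      nlinarith [pow_pos (by norm_num : (0:ℝ) < 2) m, pow_pos (by norm_num : (0:ℝ) < 2) n]
    have hnorm : ‖fc (testF M N) (α : ℤ) (β : ℤ)‖ = r := by
      rw [hfc, Complex.norm_real, Real.norm_eq_abs, _root_.abs_of_nonneg]
      rw [hrdef]; positivity
    have h4 : ‖lam (α, β)‖ ≤ 4 * ‖lam (α, β) * fc (testF M N) (α : ℤ) (β : ℤ)‖ := by
      rw [norm_mul, hnorm]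
      nlinarith [norm_nonneg (lam (α, β))]
    have := mul_self_le_mul_self (norm_nonneg (lam (α, β))) h4
    simp only []
    nlinarith [norm_nonneg (lam (α, β) * fc (testF M N) (α : ℤ) (β : ℤ))]
  calc ∑ α ∈ Finset.Ico (2^m) M, ∑ β ∈ Finset.Ico (2^n) N, ‖lam (α, β)‖ ^ 2
      = ∑ p ∈ Finset.Ico (2^m) M ×ˢ Finset.Ico (2^n) N, ‖lam p‖^2 := by
        rw [Finset.sum_product]
    _ ≤ ∑ p ∈ Finset.Ico (2^m) M ×ˢ Finset.Ico (2^n) N,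
          16 * ‖lam p * fc (testF M N) (p.1 : ℤ) (p.2 : ℤ)‖^2 := Finset.sum_le_sum key
    _ = 16 * ∑ p ∈ Finset.Ico (2^m) M ×ˢ Finset.Ico (2^n) N,
          ‖lam p * fc (testF M N) (p.1 : ℤ) (p.2 : ℤ)‖^2 := by rw [Finset.mul_sum]
    _ ≤ 16 * ∑' p : ℕ × ℕ, ‖lam p * fc (testF M N) (p.1 : ℤ) (p.2 : ℤ)‖^2 := by
        have := Summable.sum_le_tsum (Finset.Ico (2^m) M ×ˢ Finset.Ico (2^n) N)
          (fun p _ => by positivity) hsum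
        linarith
    _ ≤ 16 * (K^2 * (L1norm (testF M N))^2) := by linarith
    _ ≤ 16 * K^2 := by
        have hsq : (L1norm (testF M N))^2 ≤ 1 := by nlinarith
        nlinarith [sq_nonneg K, hsq]
    _ ≤ 16 * K^2 + 1 := by linarith
end

section
/- Assume there exists $C_1 > 0$ such that for every two-dimensional lacunary 0-1 sequence $\mu$ (having at most one nonzero entry in each dyadic block $[2^k,2^{k+1}) \times [2^l,2^{l+1})$) and every $f \in H^1(\mathbb{T}\times\mathbb{T})$, $\left(\sum_{m,n} |\mu(m,n)\widehat{f}(m,n)|^2\right)^{1/2} \le C_1 \|f\|_{L^1}$. Let $\lambda : \mathbb{N}^2 \to \mathbb{C}$ satisfy $\sum_{\alpha=2^m}^{2^{m+1}-1} \sum_{\beta=2^n}^{2^{n+1}-1} |\lambda(\alpha,\beta)|^2 \le C_2$ for all $m, n \in \mathbb{N}$. Then for every $f \in H^1(\mathbb{T}\times\mathbb{T})$, $\left(\sum_{k,l \ge 1} |\lambda(k,l)\widehat{f}(k,l)|^2\right)^{1/2} \le \sqrt{C_2}\, C_1 \|f\|_{L^1}$; i.e., $\lambda$ defines a bounded multiplier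 from $H^1(\mathbb{T}\times\mathbb{T})$ to $\ell^2$. -/
open MeasureTheory Real Complex ENNReal

/-- A `0-1` sequence is two-dimensional lacunary if each dyadic block
`[2^k, 2^{k+1}) × [2^l, 2^{l+1})` contains at most one nonzero entry. -/
def IsLacunary (μ : ℕ × ℕ → ℝ) : Prop :=
  (∀ p, μ p = 0 ∨ μ p = 1) ∧
  ∀ k l : ℕ, ∀ p q : ℕ × ℕ,
    (2 ^ k ≤ p.1 ∧ p.1 < 2 ^ (k + 1) ∧ 2 ^ l ≤ p.2 ∧ p.2 < 2 ^ (l + 1)) →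
    (2 ^ k ≤ q.1 ∧ q.1 < 2 ^ (k + 1) ∧ 2 ^ l ≤ q.2 ∧ q.2 < 2 ^ (l + 1)) →
    μ p = 1 → μ q = 1 → p = q

/-- Sufficiency: the uniform dyadic block condition on `λ` implies that `λ` is a
bounded Fourier multiplier from `H¹(𝕋×𝕋)` to `ℓ²`, granted the lacunary estimate. -/
theorem multiplier_sufficient_block_condition (C₁ C₂ : ℝ) (hC₁ : 0 < C₁)
    (hlac : ∀ μ : ℕ × ℕ → ℝ, IsLacunary μ → ∀ f : ℝ × ℝ → ℂ, MemH1 f →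
      (∑' p : ℕ × ℕ, ((‖(μ p : ℂ) * fc f (p.1 : ℤ) (p.2 : ℤ)‖₊ : ℝ≥0∞)) ^ 2) ^ ((1 : ℝ) / 2)
        ≤ ENNReal.ofReal (C₁ * L1norm f))
    (lam : ℕ × ℕ → ℂ)
    (hblock : ∀ m n : ℕ,
      ∑ α ∈ Finset.Ico (2 ^ m) (2 ^ (m + 1)), ∑ β ∈ Finset.Ico (2 ^ n) (2 ^ (n + 1)),
        ‖lam (α, β)‖ ^ 2 ≤ C₂) :
    ∀ f : ℝ × ℝ → ℂ, MemH1 f →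
      (∑' p : ℕ × ℕ,
          (if 1 ≤ p.1 ∧ 1 ≤ p.2 then
            ((‖lam p * fc f (p.1 : ℤ) (p.2 : ℤ)‖₊ : ℝ≥0∞)) ^ 2 else 0)) ^ ((1 : ℝ) / 2)
        ≤ ENNReal.ofReal (Real.sqrt C₂ * C₁ * L1norm f) := by
  intro f hf
  classical
  -- dyadic blocks
  set D : ℕ × ℕ → Finset (ℕ × ℕ) := fun b =>
    (Finset.Ico (2 ^ b.1) (2 ^ (b.1 + 1))) ×ˢ (Finset.Ico (2 ^ b.2) (2 ^ (b.2 + 1))) with hD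
  have hmemD : ∀ b p, p ∈ D b ↔
      (2 ^ b.1 ≤ p.1 ∧ p.1 < 2 ^ (b.1 + 1) ∧ 2 ^ b.2 ≤ p.2 ∧ p.2 < 2 ^ (b.2 + 1)) := by
    intro b p
    simp [hD, Finset.mem_product, Finset.mem_Ico, and_assoc]
  have hDne : ∀ b, (D b).Nonempty := by
    intro b
    refine ⟨(2 ^ b.1, 2 ^ b.2), (hmemD b _).2 ?_⟩
    refine ⟨le_refl _, ?_, le_refl _, ?_⟩ <;>
      exact Nat.pow_lt_pow_right one_lt_two (Nat.lt_succ_self _)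
  -- uniqueness of the block containing a point
  have hblk : ∀ b b' p, p ∈ D b → p ∈ D b' → b = b' := by
    intro b b' p hb hb'
    rw [hmemD] at hb hb'
    have h1 : b.1 = b'.1 := by
      rw [← Nat.log_eq_of_pow_le_of_lt_pow hb.1 hb.2.1,
        ← Nat.log_eq_of_pow_le_of_lt_pow hb'.1 hb'.2.1]
    have h2 : b.2 = b'.2 := by
      rw [← Nat.log_eq_of_pow_le_of_lt_pow hb.2.2.1 hb.2.2.2,
        ← Nat.log_eq_of_pow_le_of_lt_pow hb'.2.2.1 hb'.2.2.2]
    exact Prod.ext h1 h2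
  -- choose a maximizer of |f̂| in each block
  have hmax : ∀ b, ∃ p ∈ D b, ∀ q ∈ D b,
      ‖fc f (q.1 : ℤ) (q.2 : ℤ)‖ ≤ ‖fc f (p.1 : ℤ) (p.2 : ℤ)‖ := fun b =>
    (D b).exists_max_image (fun p => ‖fc f (p.1 : ℤ) (p.2 : ℤ)‖) (hDne b)
  choose a haD hamax using hmax
  have hainj : Function.Injective a := by
    intro b b' h
    exact hblk b b' (a b) (haD b) (h ▸ haD b')
  -- the lacunary selector
  set μ : ℕ × ℕ → ℝ := fun p => if ∃ b, a b = p then 1 else 0 with hμ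
  have hμa : ∀ b, μ (a b) = 1 := by
    intro b; simp only [hμ]; rw [if_pos ⟨b, rfl⟩]
  have hμlac : IsLacunary μ := by
    constructor
    · intro p
      by_cases h : ∃ b, a b = p
      · right; simp only [hμ]; rw [if_pos h]
      · left; simp only [hμ]; rw [if_neg h]
    · intro k l p q hp hq hp1 hq1
      have hp' : ∃ b, a b = p := by
        by_contra h; simp only [hμ] at hp1; rw [if_neg h] at hp1; norm_num at hp1
      have hq' : ∃ b, a b = q := by
        by_contra h; simp only [hμ] at hq1; rw [if_neg h] at hq1; norm_num at hq1
      obtain ⟨b, rfl⟩ := hp'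
      obtain ⟨b', rfl⟩ := hq'
      have h1 : b = (k, l) := hblk b (k, l) (a b) (haD b) ((hmemD (k, l) _).2 hp)
      have h2 : b' = (k, l) := hblk b' (k, l) (a b') (haD b') ((hmemD (k, l) _).2 hq)
      rw [h1, h2]
  -- basic positivity facts
  have hC₂ : 0 ≤ C₂ := by
    refine le_trans ?_ (hblock 0 0)
    positivity
  have hL : 0 ≤ L1norm f := by
    unfold L1norm
    have : 0 ≤ ∫ p in torus2, ‖f p‖ := integral_nonneg fun p => norm_nonneg _
    positivity
  -- the key estimate from hlac
  have hS := hlac μ hμlac f hf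
  set S : ℝ≥0∞ := ∑' p : ℕ × ℕ, ((‖(μ p : ℂ) * fc f (p.1 : ℤ) (p.2 : ℤ)‖₊ : ℝ≥0∞)) ^ 2 with hSdef
  -- the target summand
  set g : ℕ × ℕ → ℝ≥0∞ := fun p =>
    if 1 ≤ p.1 ∧ 1 ≤ p.2 then ((‖lam p * fc f (p.1 : ℤ) (p.2 : ℤ)‖₊ : ℝ≥0∞)) ^ 2 else 0
    with hg
  -- block assignment map
  set blk : ℕ × ℕ → ℕ × ℕ := fun p => (Nat.log 2 p.1, Nat.log 2 p.2) with hblkdef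
  have hmemblk : ∀ p : ℕ × ℕ, 1 ≤ p.1 → 1 ≤ p.2 → p ∈ D (blk p) := by
    intro p h1 h2
    rw [hmemD]
    exact ⟨Nat.pow_log_le_self 2 (by omega), Nat.lt_pow_succ_log_self one_lt_two _,
      Nat.pow_log_le_self 2 (by omega), Nat.lt_pow_succ_log_self one_lt_two _⟩
  -- main comparison
  have hmain : ∑' p : ℕ × ℕ, g p ≤ ENNReal.ofReal C₂ * S := by
    rw [← ENNReal.tsum_fiberwise g blk]
    have step1 : ∀ b : ℕ × ℕ, (∑' p : blk ⁻¹' {b}, g p) ≤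
        ENNReal.ofReal C₂ * ((‖fc f ((a b).1 : ℤ) ((a b).2 : ℤ)‖₊ : ℝ≥0∞)) ^ 2 := by
      intro b
      rw [tsum_subtype]
      have hzero : ∀ p ∉ D b, Set.indicator (blk ⁻¹' {b}) g p = 0 := by
        intro p hp
        by_cases hpb : p ∈ blk ⁻¹' {b}
        · rw [Set.indicator_of_mem hpb]
          simp only [hg]
          rw [if_neg]
          intro ⟨h1, h2⟩
          exact hp (Set.mem_singleton_iff.1 hpb ▸ hmemblk p h1 h2)
        · exact Set.indicator_of_notMem hpb g
      rw [tsum_eq_sum hzero]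
      have hterm : ∀ p ∈ D b, Set.indicator (blk ⁻¹' {b}) g p ≤
          ((‖lam p‖₊ : ℝ≥0∞)) ^ 2 * ((‖fc f ((a b).1 : ℤ) ((a b).2 : ℤ)‖₊ : ℝ≥0∞)) ^ 2 := by
        intro p hp
        refine le_trans (Set.indicator_le_self _ _ p) ?_
        simp only [hg]
        split_ifs with h
        · have hle : ‖lam p * fc f (p.1 : ℤ) (p.2 : ℤ)‖₊ ≤
              ‖lam p‖₊ * ‖fc f ((a b).1 : ℤ) ((a b).2 : ℤ)‖₊ := by
            refine le_trans (nnnorm_mul_le _ _) ?_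
            refine mul_le_mul_of_nonneg_left ?_ zero_le
            have := hamax b p hp
            simpa [← NNReal.coe_le_coe] using this
          calc ((‖lam p * fc f (p.1 : ℤ) (p.2 : ℤ)‖₊ : ℝ≥0∞)) ^ 2
              ≤ ((‖lam p‖₊ : ℝ≥0∞) * (‖fc f ((a b).1 : ℤ) ((a b).2 : ℤ)‖₊ : ℝ≥0∞)) ^ 2 := by
                gcongr
                exact_mod_cast hle
            _ = ((‖lam p‖₊ : ℝ≥0∞)) ^ 2 *
                ((‖fc f ((a b).1 : ℤ) ((a b).2 : ℤ)‖₊ : ℝ≥0∞)) ^ 2 := by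
                rw [mul_pow]
        · exact zero_le
      refine le_trans (Finset.sum_le_sum hterm) ?_
      rw [← Finset.sum_mul]
      refine mul_le_mul_of_nonneg_right ?_ zero_le
      have : ∑ p ∈ D b, ((‖lam p‖₊ : ℝ≥0∞)) ^ 2 =
          ENNReal.ofReal (∑ p ∈ D b, ‖lam p‖ ^ 2) := by
        rw [ENNReal.ofReal_sum_of_nonneg (fun p _ => by positivity)]
        refine Finset.sum_congr rfl fun p _ => ?_
        rw [ENNReal.ofReal_pow (norm_nonneg _), ofReal_norm, enorm_eq_nnnorm]
      rw [this]
      refine ENNReal.ofReal_le_ofReal ?_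
      have := hblock b.1 b.2
      calc ∑ p ∈ D b, ‖lam p‖ ^ 2
          = ∑ α ∈ Finset.Ico (2 ^ b.1) (2 ^ (b.1 + 1)),
            ∑ β ∈ Finset.Ico (2 ^ b.2) (2 ^ (b.2 + 1)), ‖lam (α, β)‖ ^ 2 := by
            simp only [hD]; exact Finset.sum_product _ _ _
        _ ≤ C₂ := this
    refine le_trans (ENNReal.tsum_le_tsum step1) ?_
    rw [ENNReal.tsum_mul_left]
    refine mul_le_mul_of_nonneg_left ?_ zero_le
    have hrw : ∀ b : ℕ × ℕ, ((‖fc f ((a b).1 : ℤ) ((a b).2 : ℤ)‖₊ : ℝ≥0∞)) ^ 2 =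
        ((‖(μ (a b) : ℂ) * fc f ((a b).1 : ℤ) ((a b).2 : ℤ)‖₊ : ℝ≥0∞)) ^ 2 := by
      intro b
      rw [hμa b]
      norm_num
    calc (∑' b : ℕ × ℕ, ((‖fc f ((a b).1 : ℤ) ((a b).2 : ℤ)‖₊ : ℝ≥0∞)) ^ 2)
        = ∑' b : ℕ × ℕ, ((‖(μ (a b) : ℂ) * fc f ((a b).1 : ℤ) ((a b).2 : ℤ)‖₊ : ℝ≥0∞)) ^ 2 :=
          tsum_congr hrw
      _ ≤ S := ENNReal.tsum_comp_le_tsum_of_injective hainj _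
  -- conclude
  calc (∑' p : ℕ × ℕ, g p) ^ ((1 : ℝ) / 2)
      ≤ (ENNReal.ofReal C₂ * S) ^ ((1 : ℝ) / 2) :=
        ENNReal.rpow_le_rpow hmain (by norm_num)
    _ = (ENNReal.ofReal C₂) ^ ((1 : ℝ) / 2) * S ^ ((1 : ℝ) / 2) :=
        ENNReal.mul_rpow_of_nonneg _ _ (by norm_num)
    _ ≤ ENNReal.ofReal (Real.sqrt C₂) * ENNReal.ofReal (C₁ * L1norm f) := by
        refine mul_le_mul' (le_of_eq ?_) hS
        rw [ENNReal.ofReal_rpow_of_nonneg hC₂ (by norm_num), Real.sqrt_eq_rpow]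
    _ = ENNReal.ofReal (Real.sqrt C₂ * C₁ * L1norm f) := by
        rw [← ENNReal.ofReal_mul (Real.sqrt_nonneg _), mul_assoc]
end
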